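/- Fix θ₀, θ_R ∈ S_{2π} and z ∈ ρ(H_{θ₀,θ_R}), and let u_{+,θ₀,θ_R}(z,·) and u_{−,θ₀,θ_R}(z,·) be the unique solutions of −u'' + Vu = zu with u,u' ∈ AC([0,R]) satisfying γ_{θ₀,θ_R}(u_{+,θ₀,θ_R}(z,·)) = (1,0) and γ_{θ₀,θ_R}(u_{−,θ₀,θ_R}(z,·)) = (0,1). Then their Wronskian satisfies W(u_{+,θ₀,θ_R}(z,·), u_{−,θ₀,θ_R}(z,·)) = Δ(z,R,θ₀,θ_R)^{-1}. -/

import Mathlib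

open MeasureTheory Filter
open scoped InnerProductSpace

noncomputable section
open scoped Classical


variable {H : Type*} [NormedAddCommGroup H] [InnerProductSpace ℂ H] [CompleteSpace H]

/-- `T` is the (bounded, everywhere defined) inverse of `A - z·I`. -/
def IsResolvent (A : H →ₗ.[ℂ] H) (z : ℂ) (T : H →L[ℂ] H) : Prop :=
  (∀ x : H, ∃ hx : T x ∈ A.domain, A ⟨T x, hx⟩ - z • T x = x) ∧
  ∀ u : A.domain, T (A u - z • (u : H)) = (u : H)

/-- The resolvent set of an unbounded operator. -/
def resolventSetP (A : H →ₗ.[ℂ] H) : Set ℂ := {z | ∃ T, IsResolvent A z T}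

/-- The spectrum of an unbounded operator. -/
def specP (A : H →ₗ.[ℂ] H) : Set ℂ := (resolventSetP A)ᶜ

/-- The resolvent `(A - z·I)⁻¹` (junk value `0` off the resolvent set). -/
def res (A : H →ₗ.[ℂ] H) (z : ℂ) : H →L[ℂ] H :=
  if h : ∃ T, IsResolvent A z T then h.choose else 0

/-- The operator `A + t·I` (same domain). -/
def shiftP (A : H →ₗ.[ℂ] H) (t : ℂ) : H →ₗ.[ℂ] H :=
  ⟨A.domain, A.toFun + t • A.domain.subtype⟩

/-- `A` is of positive type: `(-∞,0] ⊆ ρ(A)` and `sup_{t ≥ 0} ‖(1+t)(A+t)⁻¹‖ < ∞`. -/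
def IsPositiveTypeP (A : H →ₗ.[ℂ] H) : Prop :=
  (∀ x : ℝ, x ≤ 0 → (x : ℂ) ∈ resolventSetP A) ∧
  ∃ M : ℝ, ∀ t : ℝ, 0 ≤ t → (1 + t) * ‖res A (-(t : ℂ))‖ ≤ M

/-- The open sector of half-opening angle `ω` about the positive reals
(`(0,∞)` for `ω = 0`). -/
def sectorS (ω : ℝ) : Set ℂ :=
  if ω = 0 then (fun x : ℝ => (x : ℂ)) '' Set.Ioi 0
  else {z : ℂ | z ≠ 0 ∧ |Complex.arg z| < ω}

/-- `A` is sectorial of angle `ω`. -/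
def IsSectorialP (A : H →ₗ.[ℂ] H) (ω : ℝ) : Prop :=
  specP A ⊆ closure (sectorS ω) ∧
  ∀ ω' : ℝ, ω < ω' → ω' < Real.pi →
    ∃ M : ℝ, ∀ z ∈ (closure (sectorS ω'))ᶜ, ‖z‖ * ‖res A z‖ ≤ M

/-- The shifted sector `-t₀ + S_ω`. -/
def shiftedSector (t0 ω : ℝ) : Set ℂ := (fun w => -(t0 : ℂ) + w) '' sectorS ω

/-- The region `ℂ \ closure (-t₀ + S_ω)`. -/
def offSector (t0 ω : ℝ) : Set ℂ := (closure (shiftedSector t0 ω))ᶜ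

/-- The bounded operator `(A - z·I)^{-1/2}`, defined by the Balakrishnan-type formula
`(1/π) ∫₀^∞ t^{-1/2} (A + (t - z)·I)⁻¹ dt`. -/
def negSqrt (A : H →ₗ.[ℂ] H) (z : ℂ) : H →L[ℂ] H :=
  ((Real.pi : ℂ))⁻¹ • ∫ t in Set.Ioi (0 : ℝ), ((Real.sqrt t : ℂ))⁻¹ • res A (z - t)

/-- Trace-class (nuclear) bounded operators, characterized by
`sup { ∑ |⟨eᵢ, T fᵢ⟩| : (eᵢ), (fᵢ) finite orthonormal families } < ∞`. -/
def IsTraceClass (T : H →L[ℂ] H) : Prop :=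
  ∃ C : ℝ, ∀ (n : ℕ) (e f : Fin n → H), Orthonormal ℂ e → Orthonormal ℂ f →
    ∑ i, ‖⟪e i, T (f i)⟫_ℂ‖ ≤ C

/-- The trace norm `‖T‖₁`. -/
def traceNorm (T : H →L[ℂ] H) : ℝ :=
  sSup {s : ℝ | ∃ (n : ℕ) (e f : Fin n → H), Orthonormal ℂ e ∧ Orthonormal ℂ f ∧
    s = ∑ i, ‖⟪e i, T (f i)⟫_ℂ‖}

/-- The trace of a (trace-class) operator, computed in the Hilbert basis `b`. -/
def traceH (b : HilbertBasis ℕ ℂ H) (T : H →L[ℂ] H) : ℂ :=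
  ∑' n, ⟪(b n : H), T (b n)⟫_ℂ

/-- The Fredholm determinant `det (I + T)` (for `T` trace class), computed as the limit of
finite-section determinants along the Hilbert basis `b`. -/
def detI (b : HilbertBasis ℕ ℂ H) (T : H →L[ℂ] H) : ℂ :=
  limUnder atTop fun F : Finset ℕ =>
    Matrix.det (Matrix.of fun i j : F =>
      (if (i : ℕ) = (j : ℕ) then (1 : ℂ) else 0) + ⟪(b (i : ℕ) : H), T (b (j : ℕ))⟫_ℂ)


/-! ### One-dimensional Schrödinger operators on `[0,R]` -/

/-- The underlying Hilbert space `L²((0,R); dx)`. -/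
abbrev SchSp (Rr : ℝ) :=
  MeasureTheory.Lp ℂ 2 (MeasureTheory.volume.restrict (Set.Ioo (0 : ℝ) Rr))

/-- `u` (with derivative `du`) solves `-u'' + V u = z u` on `[0,R]`, with
`u, u' ∈ AC([0,R])` (the second derivative being encoded in integrated form). -/
def SolODE (Rr : ℝ) (V : ℝ → ℂ) (z : ℂ) (u du : ℝ → ℂ) : Prop :=
  (∀ x ∈ Set.Icc (0 : ℝ) Rr, HasDerivWithinAt u (du x) (Set.Icc (0 : ℝ) Rr) x) ∧
  ∀ x ∈ Set.Icc (0 : ℝ) Rr, du x = du 0 + ∫ t in (0 : ℝ)..x, (V t - z) * u t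

/-- The boundary trace `γ_{θ₀,θ_R}(u) = (cos θ₀ u(0) + sin θ₀ u'(0),
cos θ_R u(R) - sin θ_R u'(R))`. -/
def bdryC (Rr : ℝ) (t0 tR : ℂ) (u du : ℝ → ℂ) : Fin 2 → ℂ :=
  ![Complex.cos t0 * u 0 + Complex.sin t0 * du 0,
    Complex.cos tR * u Rr - Complex.sin tR * du Rr]

/-- `g` (with derivative `dg`) is an absolutely continuous representative of `f ∈ L²`
satisfying `-g'' + V g - z g = h` (in integrated form, with `h₀` a representative of
`h ∈ L²`); i.e. `f` represents `(H - z)⁻¹ h`. -/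
def SolvesAt (Rr : ℝ) (V : ℝ → ℂ) (z : ℂ) (f h : SchSp Rr) (g dg : ℝ → ℂ) : Prop :=
  (∀ᵐ x ∂(MeasureTheory.volume.restrict (Set.Ioo (0 : ℝ) Rr)), f x = g x) ∧
  (∀ x ∈ Set.Icc (0 : ℝ) Rr, HasDerivWithinAt g (dg x) (Set.Icc (0 : ℝ) Rr) x) ∧
  ∃ h0 : ℝ → ℂ,
    (∀ᵐ x ∂(MeasureTheory.volume.restrict (Set.Ioo (0 : ℝ) Rr)), h x = h0 x) ∧
    ∀ x ∈ Set.Icc (0 : ℝ) Rr,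
      dg x = dg 0 + ∫ t in (0 : ℝ)..x, (V t * g t - z * g t - h0 t)

/-- `Hop` is the Schrödinger operator `H_{θ₀,θ_R} = -d²/dx² + V` in `L²((0,R); dx)` with
separated boundary conditions `γ_{θ₀,θ_R}(g) = 0`, characterized through its graph. -/
def IsSchrodingerOp (Rr : ℝ) (V : ℝ → ℂ) (t0 tR : ℂ)
    (Hop : SchSp Rr →ₗ.[ℂ] SchSp Rr) : Prop :=
  ∀ f h : SchSp Rr, (f, h) ∈ Hop.graph ↔
    ∃ g dg : ℝ → ℂ, SolvesAt Rr V 0 f h g dg ∧ bdryC Rr t0 tR g dg = 0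

/-- `Λ` is the boundary data map `Λ_{θ₀,θ_R}^{θ₀',θ_R'}(z)`: for every solution `u` of
`-u'' + Vu = zu`, `Λ` maps `γ_{θ₀,θ_R}(u)` to `γ_{θ₀',θ_R'}(u)`. -/
def IsBoundaryDataMap (Rr : ℝ) (V : ℝ → ℂ) (t0 tR t0' tR' : ℂ) (z : ℂ)
    (Λ : Matrix (Fin 2) (Fin 2) ℂ) : Prop :=
  ∀ u du : ℝ → ℂ, SolODE Rr V z u du →
    Λ.mulVec (bdryC Rr t0 tR u du) = bdryC Rr t0' tR' u du

/-- `G` is the map `γ_{θ₀',θ_R'} ∘ (Hop - z)⁻¹ : L²((0,R)) → ℂ²`. -/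
def IsBdryResolventMap (Rr : ℝ) (V : ℝ → ℂ) (t0' tR' : ℂ) (z : ℂ)
    (Hop : SchSp Rr →ₗ.[ℂ] SchSp Rr)
    (G : SchSp Rr →L[ℂ] EuclideanSpace ℂ (Fin 2)) : Prop :=
  ∀ (h : SchSp Rr) (g dg : ℝ → ℂ), SolvesAt Rr V z (res Hop z h) h g dg →
    ∀ i : Fin 2, G h i = bdryC Rr t0' tR' g dg i

/-- The region `ℂ \ [c, ∞)`. -/
def offCut (c : ℝ) : Set ℂ := {z : ℂ | z.im ≠ 0 ∨ z.re < c}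

/-- `N` is the family `z ↦ (Hop - z)^{-1/2}`, defined via the spectral theorem with branch
cut along `[c, ∞)` (`c = inf σ(Hop)`): analytic on `ℂ \ [c,∞)`, squaring to the resolvent,
and positive (self-adjoint) for real `z < c`. -/
def IsSqrtResFam (Rr : ℝ) (Hop : SchSp Rr →ₗ.[ℂ] SchSp Rr) (c : ℝ)
    (N : ℂ → (SchSp Rr →L[ℂ] SchSp Rr)) : Prop :=
  (∀ z ∈ offCut c, (N z).comp (N z) = res Hop z) ∧
  (∀ x : ℝ, x < c →
    (∀ v w : SchSp Rr, ⟪N (x : ℂ) v, w⟫_ℂ = ⟪v, N (x : ℂ) w⟫_ℂ) ∧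
    ∀ v : SchSp Rr, 0 ≤ (⟪v, N (x : ℂ) v⟫_ℂ).re) ∧
  DifferentiableOn ℂ N (offCut c)

/-- The infimum `e₀ = inf(σ(Hop) ∪ σ(Hop'))`. -/
def einf (Rr : ℝ) (Hop Hop' : SchSp Rr →ₗ.[ℂ] SchSp Rr) : ℝ :=
  sInf {x : ℝ | (x : ℂ) ∈ specP Hop ∪ specP Hop'}

/-- The infimum of the spectrum of a single operator. -/
def einf1 (Rr : ℝ) (Hop : SchSp Rr →ₗ.[ℂ] SchSp Rr) : ℝ :=
  sInf {x : ℝ | (x : ℂ) ∈ specP Hop}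



section AuxWronskian
open Set

lemma sym_fubini {x : ℝ} (f g : ℝ → ℂ)
    (hf : IntegrableOn f (Ioc 0 x)) (hg : IntegrableOn g (Ioc 0 x)) :
    (∫ t in Ioc 0 x, f t) * (∫ t in Ioc 0 x, g t)
      = (∫ t in Ioc 0 x, f t * ∫ s in Ioc 0 t, g s)
        + (∫ t in Ioc 0 x, g t * ∫ s in Ioc 0 t, f s) := by
  set μ := volume.restrict (Ioc (0:ℝ) x) with hμ
  have hfi : Integrable f μ := hf
  have hgi : Integrable g μ := hg
  set h : ℝ × ℝ → ℂ := fun p => f p.1 * g p.2 with hh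
  have hint : Integrable h (μ.prod μ) := hfi.mul_prod hgi
  have hA : MeasurableSet {p : ℝ × ℝ | p.2 ≤ p.1} :=
    measurableSet_le measurable_snd measurable_fst
  have hsplit : (∫ p in {p : ℝ × ℝ | p.2 ≤ p.1}, h p ∂μ.prod μ)
      + (∫ p in {p : ℝ × ℝ | p.2 ≤ p.1}ᶜ, h p ∂μ.prod μ) = ∫ p, h p ∂μ.prod μ :=
    integral_add_compl hA hint
  have hprod : ∫ p, h p ∂μ.prod μ = (∫ t in Ioc 0 x, f t) * (∫ t in Ioc 0 x, g t) :=
    integral_prod_mul f g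
  -- first piece
  have h1 : (∫ p in {p : ℝ × ℝ | p.2 ≤ p.1}, h p ∂μ.prod μ)
      = ∫ t in Ioc 0 x, f t * ∫ s in Ioc 0 t, g s := by
    rw [← integral_indicator hA]
    rw [MeasureTheory.integral_prod _ (hint.indicator hA)]
    refine integral_congr_ae ?_
    filter_upwards [ae_restrict_mem measurableSet_Ioc] with t ht
    have : ∀ s : ℝ, ({p : ℝ × ℝ | p.2 ≤ p.1}.indicator h) (t, s)
        = (Iic t).indicator (fun s => f t * g s) s := by
      intro s
      by_cases hs : s ≤ t
      · rw [Set.indicator_of_mem (by exact hs) h, Set.indicator_of_mem (by exact hs)]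
      · rw [Set.indicator_of_notMem (by exact hs) h, Set.indicator_of_notMem (by exact hs)]
    simp_rw [this]
    rw [integral_indicator measurableSet_Iic, hμ, Measure.restrict_restrict measurableSet_Iic]
    have hset : Iic t ∩ Ioc (0:ℝ) x = Ioc 0 t := by
      ext s; simp only [mem_inter_iff, mem_Iic, mem_Ioc]
      exact ⟨fun ⟨h1, h2, _⟩ => ⟨h2, h1⟩, fun ⟨h1, h2⟩ => ⟨h2, h1, h2.trans ht.2⟩⟩
    rw [hset, integral_const_mul]
  -- second piece
  have h2 : (∫ p in {p : ℝ × ℝ | p.2 ≤ p.1}ᶜ, h p ∂μ.prod μ)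
      = ∫ t in Ioc 0 x, g t * ∫ s in Ioc 0 t, f s := by
    rw [← integral_indicator hA.compl]
    rw [MeasureTheory.integral_prod_symm _ (hint.indicator hA.compl)]
    refine integral_congr_ae ?_
    filter_upwards [ae_restrict_mem measurableSet_Ioc] with s hs
    have : ∀ t : ℝ, ({p : ℝ × ℝ | p.2 ≤ p.1}ᶜ.indicator h) (t, s)
        = (Iio s).indicator (fun t => f t * g s) t := by
      intro t
      by_cases hts : t < s
      · rw [Set.indicator_of_mem (by simpa using hts.not_ge) h,
          Set.indicator_of_mem (by exact hts)]
      · rw [Set.indicator_of_notMem (by simpa using not_lt.1 hts) h,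
          Set.indicator_of_notMem (by exact hts)]
    simp_rw [this]
    rw [integral_indicator measurableSet_Iio, hμ, Measure.restrict_restrict measurableSet_Iio]
    have hset : Iio s ∩ Ioc (0:ℝ) x = Ioo 0 s := by
      ext t; simp only [mem_inter_iff, mem_Iio, mem_Ioo, mem_Ioc]
      exact ⟨fun ⟨h1, h2, _⟩ => ⟨h2, h1⟩, fun ⟨h1, h2⟩ => ⟨h2, h1, h2.le.trans hs.2⟩⟩
    rw [hset, ← integral_Ioc_eq_integral_Ioo]
    rw [show ∫ t in Ioc (0:ℝ) s, f t * g s = (∫ t in Ioc (0:ℝ) s, f t) * g s from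
      integral_mul_const _ _]
    ring
  rw [← hprod, ← hsplit, h1, h2]

lemma wronskian_const (Rr : ℝ) (V : ℝ → ℂ)
    (hV : IntegrableOn V (Ioo 0 Rr)) (z : ℂ) (a da b db : ℝ → ℂ)
    (ha : SolODE Rr V z a da) (hb : SolODE Rr V z b db) :
    ∀ x ∈ Icc (0:ℝ) Rr, a x * db x - da x * b x = a 0 * db 0 - da 0 * b 0 := by
  intro x hx
  obtain ⟨hx0, hxR⟩ := hx
  have h0R : (0:ℝ) ≤ Rr := hx0.trans hxR
  have hacont : ContinuousOn a (Icc 0 Rr) := fun t ht => (ha.1 t ht).continuousWithinAt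
  have hbcont : ContinuousOn b (Icc 0 Rr) := fun t ht => (hb.1 t ht).continuousWithinAt
  have hVz : IntegrableOn (fun t => V t - z) (Icc 0 Rr) := by
    rw [integrableOn_Icc_iff_integrableOn_Ioo]
    exact hV.sub (integrableOn_const measure_Ioo_lt_top.ne)
  set ga : ℝ → ℂ := fun t => (V t - z) * a t with hga_def
  set gb : ℝ → ℂ := fun t => (V t - z) * b t with hgb_def
  have hga : IntegrableOn ga (Icc 0 Rr) := hVz.mul_continuousOn hacont isCompact_Icc
  have hgb : IntegrableOn gb (Icc 0 Rr) := hVz.mul_continuousOn hbcont isCompact_Icc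
  have hdacont : ContinuousOn da (Icc 0 Rr) := by
    refine ContinuousOn.congr (f := fun y => da 0 + ∫ t in Ioc 0 y, ga t) ?_ ?_
    · exact continuousOn_const.add (intervalIntegral.continuousOn_primitive hga)
    · intro y hy
      rw [ha.2 y hy, intervalIntegral.integral_of_le hy.1]
  have hdbcont : ContinuousOn db (Icc 0 Rr) := by
    refine ContinuousOn.congr (f := fun y => db 0 + ∫ t in Ioc 0 y, gb t) ?_ ?_
    · exact continuousOn_const.add (intervalIntegral.continuousOn_primitive hgb)
    · intro y hy
      rw [hb.2 y hy, intervalIntegral.integral_of_le hy.1]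
  -- FTC, valid for every endpoint y in [0, Rr]
  have ftc : ∀ (u du : ℝ → ℂ), SolODE Rr V z u du → ContinuousOn du (Icc 0 Rr) →
      ∀ y ∈ Icc (0:ℝ) Rr, ∫ t in Ioc (0:ℝ) y, du t = u y - u 0 := by
    intro u du hu hduc y hy
    have hIcc : Icc (0:ℝ) y ⊆ Icc 0 Rr := Icc_subset_Icc le_rfl hy.2
    rw [← intervalIntegral.integral_of_le hy.1]
    refine intervalIntegral.integral_eq_sub_of_hasDeriv_right_of_le hy.1
      ((show ContinuousOn u (Icc 0 Rr) from fun t ht => (hu.1 t ht).continuousWithinAt).mono hIcc) ?_ ?_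
    · intro t ht
      have ht' : t ∈ Ioo (0:ℝ) Rr := ⟨ht.1, lt_of_lt_of_le ht.2 hy.2⟩
      exact ((hu.1 t (Ioo_subset_Icc_self ht')).hasDerivAt
        (Icc_mem_nhds ht'.1 ht'.2)).hasDerivWithinAt
    · refine (hduc.mono ?_).intervalIntegrable
      rw [uIcc_of_le hy.1]; exact hIcc
  have hIoc : Ioc (0:ℝ) x ⊆ Icc 0 Rr :=
    Ioc_subset_Icc_self.trans (Icc_subset_Icc le_rfl hxR)
  have hxmem : x ∈ Icc (0:ℝ) Rr := ⟨hx0, hxR⟩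
  have hEa : ∫ t in Ioc (0:ℝ) x, da t = a x - a 0 := ftc a da ha hdacont x hxmem
  have hEb : ∫ t in Ioc (0:ℝ) x, db t = b x - b 0 := ftc b db hb hdbcont x hxmem
  have hprim : ∀ (u du : ℝ → ℂ), SolODE Rr V z u du →
      ∀ y ∈ Icc (0:ℝ) Rr, ∫ t in Ioc (0:ℝ) y, (V t - z) * u t = du y - du 0 := by
    intro u du hu y hy
    have := hu.2 y hy
    rw [intervalIntegral.integral_of_le hy.1] at this
    rw [this]; ring
  have hEA : ∫ t in Ioc (0:ℝ) x, ga t = da x - da 0 := hprim a da ha x hxmem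
  have hEB : ∫ t in Ioc (0:ℝ) x, gb t = db x - db 0 := hprim b db hb x hxmem
  -- integrabilities on Ioc 0 x
  have hdaI : IntegrableOn da (Ioc 0 x) :=
    ((hdacont.mono (Icc_subset_Icc le_rfl hxR)).integrableOn_Icc).mono_set Ioc_subset_Icc_self
  have hdbI : IntegrableOn db (Ioc 0 x) :=
    ((hdbcont.mono (Icc_subset_Icc le_rfl hxR)).integrableOn_Icc).mono_set Ioc_subset_Icc_self
  have hgaI : IntegrableOn ga (Ioc 0 x) := hga.mono_set hIoc
  have hgbI : IntegrableOn gb (Ioc 0 x) := hgb.mono_set hIoc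
  have haI : IntegrableOn a (Ioc 0 x) :=
    ((hacont.mono (Icc_subset_Icc le_rfl hxR)).integrableOn_Icc).mono_set Ioc_subset_Icc_self
  have hbI : IntegrableOn b (Ioc 0 x) :=
    ((hbcont.mono (Icc_subset_Icc le_rfl hxR)).integrableOn_Icc).mono_set Ioc_subset_Icc_self
  have hdadbI : IntegrableOn (fun t => da t * db t) (Ioc 0 x) :=
    (((hdacont.mul hdbcont).mono (Icc_subset_Icc le_rfl hxR)).integrableOn_Icc).mono_set
      Ioc_subset_Icc_self
  have hgbaI : IntegrableOn (fun t => gb t * a t) (Ioc 0 x) :=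
    ((hgb.mul_continuousOn hacont isCompact_Icc).mono_set hIoc)
  have hgabI : IntegrableOn (fun t => ga t * b t) (Ioc 0 x) :=
    ((hga.mul_continuousOn hbcont isCompact_Icc).mono_set hIoc)
  -- Fubini identity 1 : f = da, g = gb
  have F1 := sym_fubini da gb hdaI hgbI
  rw [hEa, hEB] at F1
  have F1a : (∫ t in Ioc (0:ℝ) x, da t * ∫ s in Ioc 0 t, gb s)
      = (∫ t in Ioc (0:ℝ) x, da t * db t) - (a x - a 0) * db 0 := by
    have : (∫ t in Ioc (0:ℝ) x, da t * ∫ s in Ioc 0 t, gb s)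
        = ∫ t in Ioc (0:ℝ) x, (da t * db t - da t * db 0) := by
      refine integral_congr_ae ?_
      filter_upwards [ae_restrict_mem measurableSet_Ioc] with t ht
      rw [hprim b db hb t (hIoc ht)]; ring
    rw [this, integral_sub hdadbI (hdaI.mul_const _), integral_mul_const, hEa]
  have F1b : (∫ t in Ioc (0:ℝ) x, gb t * ∫ s in Ioc 0 t, da s)
      = (∫ t in Ioc (0:ℝ) x, gb t * a t) - (db x - db 0) * a 0 := by
    have : (∫ t in Ioc (0:ℝ) x, gb t * ∫ s in Ioc 0 t, da s)
        = ∫ t in Ioc (0:ℝ) x, (gb t * a t - gb t * a 0) := by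
      refine integral_congr_ae ?_
      filter_upwards [ae_restrict_mem measurableSet_Ioc] with t ht
      rw [ftc a da ha hdacont t (hIoc ht)]; ring
    rw [this, integral_sub hgbaI (hgbI.mul_const _), integral_mul_const, hEB]
  rw [F1a, F1b] at F1
  -- Fubini identity 2 : f = db, g = ga
  have F2 := sym_fubini db ga hdbI hgaI
  rw [hEb, hEA] at F2
  have F2a : (∫ t in Ioc (0:ℝ) x, db t * ∫ s in Ioc 0 t, ga s)
      = (∫ t in Ioc (0:ℝ) x, da t * db t) - (b x - b 0) * da 0 := by
    have : (∫ t in Ioc (0:ℝ) x, db t * ∫ s in Ioc 0 t, ga s)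
        = ∫ t in Ioc (0:ℝ) x, (da t * db t - db t * da 0) := by
      refine integral_congr_ae ?_
      filter_upwards [ae_restrict_mem measurableSet_Ioc] with t ht
      rw [hprim a da ha t (hIoc ht)]; ring
    rw [this, integral_sub hdadbI (hdbI.mul_const _), integral_mul_const, hEb]
  have F2b : (∫ t in Ioc (0:ℝ) x, ga t * ∫ s in Ioc 0 t, db s)
      = (∫ t in Ioc (0:ℝ) x, ga t * b t) - (da x - da 0) * b 0 := by
    have : (∫ t in Ioc (0:ℝ) x, ga t * ∫ s in Ioc 0 t, db s)
        = ∫ t in Ioc (0:ℝ) x, (ga t * b t - ga t * b 0) := by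
      refine integral_congr_ae ?_
      filter_upwards [ae_restrict_mem measurableSet_Ioc] with t ht
      rw [ftc b db hb hdbcont t (hIoc ht)]; ring
    rw [this, integral_sub hgabI (hgaI.mul_const _), integral_mul_const, hEA]
  rw [F2a, F2b] at F2
  have hQ : (∫ t in Ioc (0:ℝ) x, gb t * a t) = ∫ t in Ioc (0:ℝ) x, ga t * b t := by
    refine integral_congr_ae (Filter.Eventually.of_forall fun t => ?_)
    simp only [hga_def, hgb_def]; ring
  linear_combination F1 - F2 + hQ

lemma solODE_combo (Rr : ℝ) (V : ℝ → ℂ) (hV : IntegrableOn V (Ioo 0 Rr)) (z : ℂ)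
    (c1 c2 : ℂ) (th dth ph dph : ℝ → ℂ)
    (hth : SolODE Rr V z th dth) (hph : SolODE Rr V z ph dph) :
    SolODE Rr V z (fun y => c1 * ph y - c2 * th y) (fun y => c1 * dph y - c2 * dth y) := by
  have hVz : IntegrableOn (fun t => V t - z) (Icc 0 Rr) := by
    rw [integrableOn_Icc_iff_integrableOn_Ioo]
    exact hV.sub (integrableOn_const measure_Ioo_lt_top.ne)
  have hphc : ContinuousOn ph (Icc 0 Rr) := fun t ht => (hph.1 t ht).continuousWithinAt
  have hthc : ContinuousOn th (Icc 0 Rr) := fun t ht => (hth.1 t ht).continuousWithinAt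
  constructor
  · intro x hx
    exact ((hph.1 x hx).const_mul c1).sub ((hth.1 x hx).const_mul c2)
  · intro x hx
    have hsub : Ioc (0:ℝ) x ⊆ Icc 0 Rr :=
      Ioc_subset_Icc_self.trans (Icc_subset_Icc le_rfl hx.2)
    have h1 : IntegrableOn (fun t => (V t - z) * ph t) (Ioc 0 x) :=
      (hVz.mul_continuousOn hphc isCompact_Icc).mono_set hsub
    have h2 : IntegrableOn (fun t => (V t - z) * th t) (Ioc 0 x) :=
      (hVz.mul_continuousOn hthc isCompact_Icc).mono_set hsub
    have e0 : ∫ t in Ioc (0:ℝ) x, (V t - z) * (c1 * ph t - c2 * th t)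
        = ∫ t in Ioc (0:ℝ) x, (c1 * ((V t - z) * ph t) - c2 * ((V t - z) * th t)) :=
      integral_congr_ae (Filter.Eventually.of_forall fun t => by ring)
    have e1 : ∫ t in Ioc (0:ℝ) x, (c1 * ((V t - z) * ph t) - c2 * ((V t - z) * th t))
        = c1 * (∫ t in Ioc (0:ℝ) x, (V t - z) * ph t)
          - c2 * (∫ t in Ioc (0:ℝ) x, (V t - z) * th t) := by
      rw [integral_sub (h1.const_mul c1) (h2.const_mul c2), integral_const_mul,
        integral_const_mul]
    have hp := hph.2 x hx
    rw [intervalIntegral.integral_of_le hx.1] at hp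
    have ht' := hth.2 x hx
    rw [intervalIntegral.integral_of_le hx.1] at ht'
    show c1 * dph x - c2 * dth x
        = c1 * dph 0 - c2 * dth 0 + ∫ t in (0:ℝ)..x, (V t - z) * (c1 * ph t - c2 * th t)
    rw [intervalIntegral.integral_of_le hx.1, e0, e1, hp, ht']
    ring

end AuxWronskian

/-- for `z ∈ ρ(H_{θ₀,θ_R})`, the Wronskian of the solutions
`u₊, u₋` with `γ_{θ₀,θ_R}(u₊) = (1,0)`, `γ_{θ₀,θ_R}(u₋) = (0,1)` equals
`Δ(z,R,θ₀,θ_R)⁻¹`, where `Δ` is built from the fundamental system `θ, φ`. -/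
theorem statement8
    (Rr : ℝ) (hR : 0 < Rr) (V : ℝ → ℂ)
    (hV : MeasureTheory.IntegrableOn V (Set.Ioo 0 Rr) MeasureTheory.volume)
    (t0 tR : ℂ)
    (ht0 : 0 ≤ t0.re ∧ t0.re < 2 * Real.pi) (htR : 0 ≤ tR.re ∧ tR.re < 2 * Real.pi)
    (Hop : SchSp Rr →ₗ.[ℂ] SchSp Rr) (hHop : IsSchrodingerOp Rr V t0 tR Hop)
    (z : ℂ) (hz : z ∈ resolventSetP Hop)
    (up dup um dum th dth ph dph : ℝ → ℂ)
    (hup : SolODE Rr V z up dup) (hum : SolODE Rr V z um dum)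
    (hbp : bdryC Rr t0 tR up dup = ![1, 0])
    (hbm : bdryC Rr t0 tR um dum = ![0, 1])
    (hth : SolODE Rr V z th dth) (hph : SolODE Rr V z ph dph)
    (hth0 : th 0 = 1) (hdth0 : dth 0 = 0) (hph0 : ph 0 = 0) (hdph0 : dph 0 = 1) :
    ∀ x ∈ Set.Icc (0 : ℝ) Rr,
      up x * dum x - dup x * um x =
        (Complex.cos t0 * Complex.cos tR * ph Rr - Complex.cos t0 * Complex.sin tR * dph Rr -
            Complex.sin t0 * Complex.cos tR * th Rr +
            Complex.sin t0 * Complex.sin tR * dth Rr)⁻¹ := by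
  intro x hx
  have hvsol := solODE_combo Rr V hV z (Complex.cos t0) (Complex.sin t0) th dth ph dph hth hph
  have hRmem : Rr ∈ Set.Icc (0:ℝ) Rr := Set.mem_Icc.2 ⟨hR.le, le_rfl⟩
  have hbp0 : Complex.cos t0 * up 0 + Complex.sin t0 * dup 0 = 1 := by
    simpa [bdryC] using congrFun hbp 0
  have hbm0 : Complex.cos t0 * um 0 + Complex.sin t0 * dum 0 = 0 := by
    simpa [bdryC] using congrFun hbm 0
  have hbm1 : Complex.cos tR * um Rr - Complex.sin tR * dum Rr = 1 := by
    simpa [bdryC] using congrFun hbm 1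
  have W1 := wronskian_const Rr V hV z um dum _ _ hum hvsol Rr hRmem
  have W2 := wronskian_const Rr V hV z _ _ up dup hvsol hup Rr hRmem
  have W3R := wronskian_const Rr V hV z up dup um dum hup hum Rr hRmem
  have W3x := wronskian_const Rr V hV z up dup um dum hup hum x hx
  simp only [hph0, hth0, hdph0, hdth0] at W1 W2
  have h1 : (up 0 * dum 0 - dup 0 * um 0) * (Complex.cos t0 * ph Rr - Complex.sin t0 * th Rr)
      = um Rr := by
    linear_combination (-(Complex.cos t0 * ph Rr - Complex.sin t0 * th Rr)) * W3R
      - up Rr * W1 - up Rr * hbm0 - um Rr * W2 + um Rr * hbp0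
  have h2 : (up 0 * dum 0 - dup 0 * um 0) * (Complex.cos t0 * dph Rr - Complex.sin t0 * dth Rr)
      = dum Rr := by
    linear_combination (-(Complex.cos t0 * dph Rr - Complex.sin t0 * dth Rr)) * W3R
      - dup Rr * W1 - dup Rr * hbm0 - dum Rr * W2 + dum Rr * hbp0
  have hD : (up 0 * dum 0 - dup 0 * um 0) *
      (Complex.cos t0 * Complex.cos tR * ph Rr - Complex.cos t0 * Complex.sin tR * dph Rr -
        Complex.sin t0 * Complex.cos tR * th Rr +
        Complex.sin t0 * Complex.sin tR * dth Rr) = 1 := by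
    linear_combination Complex.cos tR * h1 - Complex.sin tR * h2 + hbm1
  rw [W3x]
  exact eq_inv_of_mul_eq_one_right (by linear_combination hD)

end
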